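/- Let X ⊂ ℝ be a finite set of prizes and R a risk-consistent linear order on Δ(X). For every r ∈ Δ({b,w}) and every p ∈ Δ(X) with r R p and p ≠ r, either p first-order stochastically dominates r or r first-order stochastically dominates p. -/

import Mathlib

open scoped BigOperators

noncomputable section

/-- Lotteries over the finite prize set `X ⊂ ℝ`, as a subset of Euclidean space `ℝ^X`. -/
abbrev Lot (X : Finset ℝ) : Type :=
  {p : EuclideanSpace ℝ ↥X // (∀ x, 0 ≤ p x) ∧ ∑ x, p x = 1}

variable {X : Finset ℝ}

noncomputable instance : DecidableEq (Lot X) := Classical.decEq _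

/-- The degenerate distribution on prize `x`, as a vector. -/
def degv (x : ↥X) : EuclideanSpace ℝ ↥X := WithLp.toLp 2 (fun y => if y = x then (1 : ℝ) else 0)

/-- The degenerate lottery `δ_x`. -/
def deg (x : ↥X) : Lot X :=
  ⟨degv x, fun y => by by_cases h : y = x <;> simp [degv, h], by simp [degv]⟩

/-- The mixture `αp + (1-α)q`, as a vector. -/
def mixv (α : ℝ) (p q : Lot X) : EuclideanSpace ℝ ↥X := α • p.1 + (1 - α) • q.1

/-- The best prize `b = max X` as an element of `X`. -/
def bIdx (hX : X.Nonempty) : ↥X := ⟨X.max' hX, X.max'_mem hX⟩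

/-- The worst prize `w = min X` as an element of `X`. -/
def wIdx (hX : X.Nonempty) : ↥X := ⟨X.min' hX, X.min'_mem hX⟩

/-- `p` first-order stochastically dominates `q`. -/
def FOSDom (p q : Lot X) : Prop :=
  ∀ z ∈ X, (∑ x : ↥X, if z ≤ (x : ℝ) then q.1 x else 0) ≤
    ∑ x : ↥X, if z ≤ (x : ℝ) then p.1 x else 0

/-- `p` is a mean-preserving spread of `q`. -/
def MPS (p q : Lot X) : Prop :=
  p ≠ q ∧ (∑ x : ↥X, p.1 x * (x : ℝ)) = (∑ x : ↥X, q.1 x * (x : ℝ)) ∧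
  ∀ z : ℝ, (∑ x : ↥X, q.1 x * max (z - (x : ℝ)) 0) ≤
    ∑ x : ↥X, p.1 x * max (z - (x : ℝ)) 0

/-- `p` is an extreme spread of `q`. -/
def ES (hX : X.Nonempty) (p q : Lot X) : Prop :=
  ∃ β α : ℝ, 0 ≤ β ∧ β < 1 ∧ q.1 (bIdx hX) < α ∧ α < 1 - q.1 (wIdx hX) ∧
    p.1 = β • q.1 + (1 - β) • (α • degv (bIdx hX) + (1 - α) • degv (wIdx hX))

/-- A reference order is risk-consistent if safer lotteries rank higher. -/
def RiskConsistent (hX : X.Nonempty) (R : Lot X → Lot X → Prop) : Prop :=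
  ∀ p q : Lot X, (MPS p q ∨ ES hX p q) → R q p

/-- `p` is a mixture of `δ_b` and `δ_w`, i.e. `p ∈ Δ({b,w})`. -/
def inBW (hX : X.Nonempty) (p : Lot X) : Prop :=
  ∀ x : ↥X, x ≠ bIdx hX → x ≠ wIdx hX → p.1 x = 0

/-- Expected utility of lottery `p` under Bernoulli utility `u`. -/
def EV (p : Lot X) (u : ↥X → ℝ) : ℝ := ∑ x : ↥X, p.1 x * u x

/-- `c` satisfies WARP over a collection `S` of choice problems. -/
def WARPover (c : Finset (Lot X) → Finset (Lot X)) (S : Set (Finset (Lot X))) : Prop :=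
  ∀ A ∈ S, ∀ B ∈ S, B ⊆ A → (c A ∩ B).Nonempty → c A ∩ B = c B

/-- `c` satisfies Independence over a collection `S` of choice problems. -/
def IndepOver (c : Finset (Lot X) → Finset (Lot X)) (S : Set (Finset (Lot X))) : Prop :=
  ∀ A ∈ S, ∀ B ∈ S, ∀ α : ℝ, 0 < α → α < 1 →
    ∀ p q s pas qas : Lot X, pas.1 = mixv α p s → qas.1 = mixv α q s →
      (p ∈ c A → q ∈ A → qas ∈ c B → pas ∈ B → pas ∈ c B) ∧
      (pas ∈ c A → qas ∈ A → q ∈ c B → p ∈ B → p ∈ c B)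

/-- Continuity: `c` has a closed graph w.r.t. the Hausdorff distance. -/
def ClosedGraphC (c : Finset (Lot X) → Finset (Lot X)) : Prop :=
  ∀ (x : Lot X) (xs : ℕ → Lot X) (A : Finset (Lot X)) (As : ℕ → Finset (Lot X)),
    A.Nonempty → (∀ n, (As n).Nonempty) →
    Filter.Tendsto xs Filter.atTop (nhds x) →
    Filter.Tendsto (fun n => Metric.hausdorffDist ((As n : Set (Lot X))) (A : Set (Lot X)))
      Filter.atTop (nhds 0) →
    (∀ n, xs n ∈ c (As n)) → x ∈ c A

/-- `c` admits an AREU representation with data `(R, u, r)`. -/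
def IsAREU (hX : X.Nonempty) (c : Finset (Lot X) → Finset (Lot X))
    (R : Lot X → Lot X → Prop) (u : Lot X → ↥X → ℝ) (r : Finset (Lot X) → Lot X) : Prop :=
  IsLinearOrder (Lot X) R ∧ RiskConsistent hX R ∧
  (∀ p : Lot X, ∀ x y : ↥X, (x : ℝ) < (y : ℝ) → u p x < u p y) ∧
  (∀ (p : Lot X) (x : ↥X), u p x ∈ Set.Icc (0 : ℝ) 1) ∧
  (∀ A : Finset (Lot X), A.Nonempty → r A ∈ A ∧ ∀ p ∈ A, R (r A) p) ∧
  (∀ A : Finset (Lot X), A.Nonempty → ∀ p : Lot X,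
    p ∈ c A ↔ p ∈ A ∧ ∀ q ∈ A, EV q (u (r A)) ≤ EV p (u (r A))) ∧
  (∀ p q : Lot X, R q p → ∃ f : ℝ → ℝ, ConcaveOn ℝ (Set.Icc 0 1) f ∧
    (∀ t ∈ Set.Icc (0 : ℝ) 1, f t ∈ Set.Icc (0 : ℝ) 1) ∧ ∀ x : ↥X, u q x = f (u p x)) ∧
  ClosedGraphC c


/-- Lemma 5: for a risk-consistent linear order `R`, any `r ∈ Δ({b,w})`
and `p ≠ r` with `r R p` are comparable via first-order stochastic dominance. -/
theorem stmt15 (X : Finset ℝ) (hX : X.Nonempty) (hcard : 2 ≤ X.card)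
    (R : Lot X → Lot X → Prop) (hlin : IsLinearOrder (Lot X) R)
    (hrc : RiskConsistent hX R) :
    ∀ r p : Lot X, inBW hX r → R r p → p ≠ r →
      FOSDom p r ∨ FOSDom r p := by
  intro r p hbwr hRrp hne
  set b := bIdx hX with hb_def
  set w := wIdx hX with hw_def
  have hwle : ∀ x : ↥X, (w : ℝ) ≤ (x : ℝ) := fun x => X.min'_le _ x.2
  have hleb : ∀ x : ↥X, (x : ℝ) ≤ (b : ℝ) := fun x => X.le_max' _ x.2
  have hwltb : (w : ℝ) < (b : ℝ) := X.min'_lt_max'_of_card (by omega)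
  have hbw : b ≠ w := by
    intro h
    rw [h] at hwltb
    exact lt_irrefl _ hwltb
  -- r b + r w = 1
  have hrsum : r.1 b + r.1 w = 1 := by
    have h1 : ∑ x, r.1 x = 1 := r.2.2
    rw [← Finset.add_sum_erase _ _ (Finset.mem_univ b),
        ← Finset.add_sum_erase _ _ (Finset.mem_erase.mpr ⟨Ne.symm hbw, Finset.mem_univ w⟩)] at h1
    have h0 : ∑ x ∈ (Finset.univ.erase b).erase w, r.1 x = 0 :=
      Finset.sum_eq_zero (fun x hx => hbwr x (Finset.mem_of_mem_erase hx |> Finset.ne_of_mem_erase)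
        (Finset.ne_of_mem_erase hx))
    rw [h0] at h1
    linarith
  -- total sums with the if, when z ≤ w
  have hfull : ∀ (q : Lot X) (z : ℝ), z ≤ (w : ℝ) →
      (∑ x : ↥X, if z ≤ (x : ℝ) then q.1 x else 0) = 1 := by
    intro q z hz
    have heq : (∑ x : ↥X, if z ≤ (x : ℝ) then q.1 x else 0) = ∑ x, q.1 x :=
      Finset.sum_congr rfl (fun x _ => if_pos (hz.trans (hwle x)))
    rw [heq, q.2.2]
  by_cases hgeb : r.1 b ≤ p.1 b
  · -- p FOSD r
    left
    intro z hz
    by_cases hzw : z ≤ (w : ℝ)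
    · rw [hfull r z hzw, hfull p z hzw]
    · push_neg at hzw
      have hrz : (∑ x : ↥X, if z ≤ (x : ℝ) then r.1 x else 0) = r.1 b := by
        rw [Finset.sum_eq_single b]
        · exact if_pos (X.le_max' z hz)
        · intro x _ hxb
          by_cases hc : z ≤ (x : ℝ)
          · rw [if_pos hc]
            refine hbwr x hxb (fun hxw => ?_)
            rw [hxw] at hc; exact absurd hc (not_le.mpr hzw)
          · exact if_neg hc
        · exact fun h => absurd (Finset.mem_univ b) h
      rw [hrz]
      calc r.1 b ≤ p.1 b := hgeb
        _ = (if z ≤ (b : ℝ) then p.1 b else 0) := (if_pos (X.le_max' z hz)).symm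
        _ ≤ ∑ x : ↥X, if z ≤ (x : ℝ) then p.1 x else 0 :=
          Finset.single_le_sum (f := fun x : ↥X => if z ≤ (x : ℝ) then p.1 x else 0)
            (fun x _ => by by_cases hc : z ≤ (x : ℝ) <;> simp [hc, p.2.1 x])
            (Finset.mem_univ b)
  · by_cases hgew : r.1 w ≤ p.1 w
    · -- r FOSD p
      right
      intro z hz
      by_cases hzw : z ≤ (w : ℝ)
      · rw [hfull r z hzw, hfull p z hzw]
      · push_neg at hzw
        have hrz : (∑ x : ↥X, if z ≤ (x : ℝ) then r.1 x else 0) = r.1 b := by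
          rw [Finset.sum_eq_single b]
          · exact if_pos (X.le_max' z hz)
          · intro x _ hxb
            by_cases hc : z ≤ (x : ℝ)
            · rw [if_pos hc]
              refine hbwr x hxb (fun hxw => ?_)
              rw [hxw] at hc; exact absurd hc (not_le.mpr hzw)
            · exact if_neg hc
          · exact fun h => absurd (Finset.mem_univ b) h
        rw [hrz]
        have hpw : ∑ x ∈ Finset.univ.erase w, p.1 x = 1 - p.1 w := by
          have h1 : ∑ x, p.1 x = 1 := p.2.2
          rw [← Finset.add_sum_erase _ _ (Finset.mem_univ w)] at h1
          linarith
        calc (∑ x : ↥X, if z ≤ (x : ℝ) then p.1 x else 0)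
            = ∑ x ∈ Finset.univ.erase w, (if z ≤ (x : ℝ) then p.1 x else 0) := by
              rw [← Finset.add_sum_erase _ _ (Finset.mem_univ w),
                if_neg (not_le.mpr hzw), zero_add]
          _ ≤ ∑ x ∈ Finset.univ.erase w, p.1 x :=
              Finset.sum_le_sum (fun x _ => by
                by_cases hc : z ≤ (x : ℝ) <;> simp [hc, p.2.1 x])
          _ = 1 - p.1 w := hpw
          _ ≤ 1 - r.1 w := by linarith
          _ = r.1 b := by linarith
    · -- contradiction: r is an extreme spread of p
      exfalso
      push_neg at hgeb hgew
      have hes : ES hX r p := by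
        refine ⟨0, r.1 b, le_refl 0, one_pos, hgeb, by linarith, ?_⟩
        ext x
        simp only [zero_smul, sub_zero, one_smul, zero_add]
        show r.1 x = (r.1 b • degv b + (1 - r.1 b) • degv w) x
        simp only [PiLp.add_apply, PiLp.smul_apply, degv, PiLp.toLp_apply, smul_eq_mul]
        by_cases hxb : x = b
        · subst hxb
          rw [if_pos rfl, if_neg hbw]
          ring
        · rw [if_neg hxb]
          by_cases hxw : x = w
          · subst hxw
            rw [if_pos rfl]
            have := hrsum
            ring_nf
            linarith
          · rw [if_neg hxw, hbwr x hxb hxw]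
            ring
      have hRpr : R p r := hrc r p (Or.inr hes)
      exact hne (by haveI := hlin; exact antisymm hRpr hRrp)

end
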